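/- For every integer m and nonnegative integer k: 2·∑_{j=0}^{k} (−1)^j·T_{m−4k−1+4j} = (−1)^k·T_m + T_{m−4k−4}. -/

import Mathlib

/-- Tribonacci numbers on the naturals. -/
def tribN : ℕ → ℤ
  | 0 => 0
  | 1 => 1
  | 2 => 1
  | n + 3 => tribN (n + 2) + tribN (n + 1) + tribN n

/-- Tribonacci at negative indices: `tribNeg n = T (-n)`, via `T (-n) = 2·T (3-n) - T (4-n)`. -/
def tribNeg : ℕ → ℤ
  | 0 => tribN 0
  | 1 => 2 * tribN 2 - tribN 3
  | 2 => 2 * tribN 1 - tribN 2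
  | 3 => 2 * tribN 0 - tribN 1
  | 4 => 2 * tribNeg 1 - tribN 0
  | n + 5 => 2 * tribNeg (n + 2) - tribNeg (n + 1)

/-- Tribonacci sequence extended to all integers. -/
def T (m : ℤ) : ℤ := if 0 ≤ m then tribN m.toNat else tribNeg (-m).toNat

lemma keyN (n : ℕ) : tribN n = 2 * tribN (n + 3) - tribN (n + 4) := by
  have h3 : tribN (n + 3) = tribN (n + 2) + tribN (n + 1) + tribN n := rfl
  have h4 : tribN (n + 4) = tribN (n + 3) + tribN (n + 2) + tribN (n + 1) := rfl
  rw [h4, h3]; ring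

lemma T_ofNat (n : ℕ) : T n = tribN n := by simp [T]

lemma T_negSucc (n : ℕ) : T (-(n + 1 : ℕ)) = tribNeg (n + 1) := by
  simp [T]; omega

lemma key (m : ℤ) : T (m - 4) = 2 * T (m - 1) - T m := by
  rcases lt_or_ge m 0 with h | h
  · obtain ⟨n, rfl⟩ : ∃ n : ℕ, m = -(n + 1 : ℕ) := ⟨(-m - 1).toNat, by omega⟩
    have e1 : (-(n + 1 : ℕ) : ℤ) - 4 = -((n + 4) + 1 : ℕ) := by push_cast; ring
    have e2 : (-(n + 1 : ℕ) : ℤ) - 1 = -((n + 1) + 1 : ℕ) := by push_cast; ring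
    rw [e1, e2, T_negSucc (n + 4), T_negSucc (n + 1), T_negSucc n]
    show tribNeg (n + 5) = 2 * tribNeg (n + 2) - tribNeg (n + 1)
    rw [tribNeg]
  · rcases lt_or_ge m 4 with h4 | h4
    · interval_cases m <;> norm_num [T, tribN, tribNeg] <;> decide
    · obtain ⟨n, rfl⟩ : ∃ n : ℕ, m = (n : ℤ) + 4 := ⟨(m - 4).toNat, by omega⟩
      have e1 : (n : ℤ) + 4 - 4 = ((n : ℕ) : ℤ) := by ring
      have e2 : (n : ℤ) + 4 - 1 = ((n + 3 : ℕ) : ℤ) := by push_cast; ring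
      have e3 : (n : ℤ) + 4 = ((n + 4 : ℕ) : ℤ) := by push_cast; ring
      rw [e1, e2, e3, T_ofNat, T_ofNat, T_ofNat]
      exact keyN n

theorem stmt6 : ∀ (m : ℤ) (k : ℕ),
    2 * ∑ j ∈ Finset.range (k + 1), (-1 : ℤ) ^ j * T (m - 4 * k - 1 + 4 * j) =
      (-1 : ℤ) ^ k * T m + T (m - 4 * k - 4) := by
  intro m k
  induction k generalizing m with
  | zero =>
    rw [Finset.sum_range_one]
    norm_num
    have := key m
    ring_nf at this ⊢
    linarith
  | succ k ih =>
    rw [Finset.sum_range_succ]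
    push_cast
    have hsum : ∑ j ∈ Finset.range (k + 1), (-1 : ℤ) ^ j * T (m - 4 * ((k : ℤ) + 1) - 1 + 4 * j)
        = ∑ j ∈ Finset.range (k + 1), (-1 : ℤ) ^ j * T ((m - 4) - 4 * (k : ℤ) - 1 + 4 * j) := by
      refine Finset.sum_congr rfl fun j _ => ?_
      congr 2
      ring
    have h2 : m - 4 * ((k : ℤ) + 1) - 1 + 4 * ((k : ℤ) + 1) = m - 1 := by ring
    have h3 : m - 4 * ((k : ℤ) + 1) - 4 = (m - 4) - 4 * (k : ℤ) - 4 := by ring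
    rw [hsum, h2, h3, mul_add, ih (m - 4), key m]
    ring
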